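/- Let 0 < L < ∞, let I be a finite index set, and let (x_i, g_i, f_i) for i ∈ I be triples with x_i, g_i ∈ ℝ^d and f_i ∈ ℝ. Then there exists a convex differentiable function f : ℝ^d → ℝ whose gradient is L-Lipschitz and which satisfies f(x_i) = f_i and ∇f(x_i) = g_i for all i ∈ I, if and only if f_i ≥ f_j + ⟨g_j, x_i − x_j⟩ + (1/(2L))‖g_i − g_j‖² holds for all i, j ∈ I. -/

import Mathlib

open scoped RealInnerProductSpace Topology
open Filter Set

section Aux
variable {E : Type*} [NormedAddCommGroup E] [InnerProductSpace ℝ E] [CompleteSpace E]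

lemma fderiv_inner_gradient {f : E → ℝ} (hf : Differentiable ℝ f) (p v : E) :
    fderiv ℝ f p v = ⟪gradient f p, v⟫ := by
  have h := (hf p).hasGradientAt
  rw [hasGradientAt_iff_hasFDerivAt] at h
  rw [h.fderiv, InnerProductSpace.toDual_apply_apply]

lemma hasDerivAt_line {f : E → ℝ} (hf : Differentiable ℝ f) (x v : E) (t : ℝ) :
    HasDerivAt (fun s : ℝ => f (x + s • v)) ⟪gradient f (x + t • v), v⟫ t := by
  have h1 : HasDerivAt (fun s : ℝ => x + s • v) v t := by
    simpa using ((hasDerivAt_id t).smul_const v).const_add x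
  have h2 := (hf (x + t • v)).hasFDerivAt
  have h3 := h2.comp_hasDerivAt t h1
  simp only [fderiv_inner_gradient hf] at h3
  exact h3

lemma convex_support_ineq {f : E → ℝ} (hc : ConvexOn ℝ Set.univ f) (hf : Differentiable ℝ f)
    (x y : E) : f x + ⟪gradient f x, y - x⟫ ≤ f y := by
  set q : ℝ → ℝ := fun t => f (x + t • (y - x)) with hq
  have hqc : ConvexOn ℝ Set.univ q := by
    have := hc.comp_affineMap (AffineMap.lineMap x y)
    have he : (f ∘ (AffineMap.lineMap x y) : ℝ → ℝ) = q := by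
      funext t
      simp [AffineMap.lineMap_apply, q, add_comm, vsub_eq_sub, vadd_eq_add]
    rw [he] at this
    simpa using this
  have hd0 : HasDerivAt q ⟪gradient f x, y - x⟫ 0 := by
    have := hasDerivAt_line hf x (y - x) 0
    simpa using this
  have hs := hqc.le_slope_of_hasDerivAt (mem_univ (0:ℝ)) (mem_univ (1:ℝ)) one_pos hd0
  have hslope : slope q 0 1 = f y - f x := by
    simp [slope_def_field, q]
  rw [hslope] at hs
  linarith

lemma descent_lemma {f : E → ℝ} {L : ℝ} (hL : 0 < L) (hf : Differentiable ℝ f)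
    (hlip : ∀ u v : E, ‖gradient f u - gradient f v‖ ≤ L * ‖u - v‖) (x y : E) :
    f y ≤ f x + ⟪gradient f x, y - x⟫ + L / 2 * ‖y - x‖ ^ 2 := by
  set v := y - x with hv
  set G : ℝ → ℝ := fun t => f (x + t • v) - t * ⟪gradient f x, v⟫ - L / 2 * t ^ 2 * ‖v‖ ^ 2
    with hG
  have hGd : ∀ t : ℝ, HasDerivAt G
      (⟪gradient f (x + t • v), v⟫ - ⟪gradient f x, v⟫ - L * t * ‖v‖ ^ 2) t := by
    intro t
    have h1 := hasDerivAt_line hf x v t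
    have h2 : HasDerivAt (fun s : ℝ => s * ⟪gradient f x, v⟫) ⟪gradient f x, v⟫ t := by
      simpa using (hasDerivAt_id t).mul_const ⟪gradient f x, v⟫
    have h3 : HasDerivAt (fun s : ℝ => L / 2 * s ^ 2 * ‖v‖ ^ 2) (L * t * ‖v‖ ^ 2) t := by
      have := ((hasDerivAt_pow 2 t).const_mul (L / 2)).mul_const (‖v‖ ^ 2)
      refine this.congr_deriv ?_
      ring
    exact (h1.sub h2).sub h3
  have hderiv_nonpos : ∀ t ∈ interior (Icc (0:ℝ) 1), deriv G t ≤ 0 := by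
    intro t ht
    rw [interior_Icc] at ht
    rw [(hGd t).deriv]
    have key : ⟪gradient f (x + t • v), v⟫ - ⟪gradient f x, v⟫ ≤ L * t * ‖v‖ ^ 2 := by
      have h1 : ⟪gradient f (x + t • v) - gradient f x, v⟫
          ≤ ‖gradient f (x + t • v) - gradient f x‖ * ‖v‖ := real_inner_le_norm _ _
      have h2 : ‖gradient f (x + t • v) - gradient f x‖ ≤ L * (t * ‖v‖) := by
        have := hlip (x + t • v) x
        simpa [norm_smul, abs_of_nonneg (le_of_lt ht.1), mul_assoc] using this
      have h3 : ‖gradient f (x + t • v) - gradient f x‖ * ‖v‖ ≤ L * (t * ‖v‖) * ‖v‖ :=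
        mul_le_mul_of_nonneg_right h2 (norm_nonneg _)
      rw [inner_sub_left] at h1
      nlinarith [norm_nonneg v]
    linarith
  have hmono : AntitoneOn G (Icc 0 1) := by
    apply antitoneOn_of_deriv_nonpos (convex_Icc 0 1)
    · exact fun t _ => (hGd t).differentiableAt.continuousAt.continuousWithinAt
    · intro t _
      exact (hGd t).differentiableAt.differentiableWithinAt
    · exact hderiv_nonpos
  have h01 := hmono (left_mem_Icc.2 zero_le_one) (right_mem_Icc.2 zero_le_one) zero_le_one
  have hG0 : G 0 = f x := by simp [hG]
  have hG1 : G 1 = f (x + v) - ⟪gradient f x, v⟫ - L / 2 * ‖v‖ ^ 2 := by simp [hG]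
  have hxy : x + v = y := by rw [hv]; abel
  rw [hG0, hG1, hxy] at h01
  linarith

lemma hasGradientAt_sub_inner {f : E → ℝ} (hf : Differentiable ℝ f) (a z : E) :
    HasGradientAt (fun w => f w - ⟪a, w⟫) (gradient f z - a) z := by
  rw [hasGradientAt_iff_hasFDerivAt, map_sub]
  have h1 : HasFDerivAt f (InnerProductSpace.toDual ℝ E (gradient f z)) z := by
    rw [← hasGradientAt_iff_hasFDerivAt]; exact (hf z).hasGradientAt
  have h2 : HasFDerivAt (fun w : E => ⟪a, w⟫) (InnerProductSpace.toDual ℝ E a) z := by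
    have h := (InnerProductSpace.toDual ℝ E a).hasFDerivAt (x := z)
    exact h
  exact h1.sub h2

lemma necessity {f : E → ℝ} {L : ℝ} (hL : 0 < L) (hc : ConvexOn ℝ Set.univ f)
    (hf : Differentiable ℝ f) (hlip : ∀ u v : E, ‖gradient f u - gradient f v‖ ≤ L * ‖u - v‖)
    (xi xj : E) :
    f xj + ⟪gradient f xj, xi - xj⟫ + 1 / (2 * L) * ‖gradient f xi - gradient f xj‖ ^ 2
      ≤ f xi := by
  set gj := gradient f xj with hgj
  set φ : E → ℝ := fun w => f w - ⟪gj, w⟫ with hφ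
  have hφgrad : ∀ z, gradient φ z = gradient f z - gj :=
    fun z => (hasGradientAt_sub_inner hf gj z).gradient
  have hφd : Differentiable ℝ φ :=
    fun z => ((hasGradientAt_sub_inner hf gj z).differentiableAt)
  have hφc : ConvexOn ℝ Set.univ φ := by
    refine ⟨convex_univ, fun u _ w _ a b ha hb hab => ?_⟩
    have h1 := hc.2 (mem_univ u) (mem_univ w) ha hb hab
    simp only [hφ, smul_eq_mul]
    rw [inner_add_right, real_inner_smul_right, real_inner_smul_right]
    simp only [smul_eq_mul] at h1
    linarith
  have hφlip : ∀ u v : E, ‖gradient φ u - gradient φ v‖ ≤ L * ‖u - v‖ := by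
    intro u v
    rw [hφgrad, hφgrad, sub_sub_sub_cancel_right]
    exact hlip u v
  set D := gradient f xi - gj with hD
  have hmin : ∀ z, φ xj ≤ φ z := by
    intro z
    have := convex_support_ineq hφc hφd xj z
    rw [hφgrad, hgj] at this
    simpa using this
  set z0 := xi - (1 / L) • D with hz0
  have hdes := descent_lemma hL hφd hφlip xi z0
  have h1 : z0 - xi = -((1 / L) • D) := by rw [hz0]; abel
  have h2 : ⟪gradient φ xi, z0 - xi⟫ = -(1 / L) * ‖D‖ ^ 2 := by
    rw [hφgrad, ← hD, h1, inner_neg_right, real_inner_smul_right, real_inner_self_eq_norm_sq]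
    ring
  have h3 : ‖z0 - xi‖ ^ 2 = (1 / L) ^ 2 * ‖D‖ ^ 2 := by
    rw [h1, norm_neg, norm_smul, Real.norm_eq_abs, abs_of_pos (by positivity), mul_pow]
  have h4 := hmin z0
  rw [h2, h3] at hdes
  have h5 : φ xj ≤ φ xi - 1 / (2 * L) * ‖D‖ ^ 2 := by
    have hL' : L ≠ 0 := ne_of_gt hL
    have heq : φ xi + -(1 / L) * ‖D‖ ^ 2 + L / 2 * ((1 / L) ^ 2 * ‖D‖ ^ 2)
        = φ xi - 1 / (2 * L) * ‖D‖ ^ 2 := by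
      field_simp
      ring
    rw [heq] at hdes
    exact le_trans h4 hdes
  have h6 : ⟪gj, xi - xj⟫ = ⟪gj, xi⟫ - ⟪gj, xj⟫ := inner_sub_right _ _ _
  simp only [hφ] at h5
  linarith [h5, h6]

end Aux

section Suff
variable {E : Type*} [NormedAddCommGroup E] [InnerProductSpace ℝ E] [FiniteDimensional ℝ E]

omit [FiniteDimensional ℝ E] in
lemma norm_combo_sq (u v : E) (a b : ℝ) (hab : a + b = 1) :
    ‖a • u + b • v‖ ^ 2 = a * ‖u‖ ^ 2 + b * ‖v‖ ^ 2 - a * b * ‖u - v‖ ^ 2 := by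
  obtain rfl : b = 1 - a := by linarith
  simp only [← real_inner_self_eq_norm_sq, inner_add_left, inner_add_right, inner_sub_left,
    inner_sub_right, real_inner_smul_left, real_inner_smul_right, real_inner_comm v u]
  ring

lemma sufficiency {ι : Type*} [Fintype ι] [Nonempty ι] {L : ℝ} (hL : 0 < L)
    (x g : ι → E) (fv : ι → ℝ)
    (hint : ∀ i j, fv j + ⟪g j, x i - x j⟫ + 1 / (2 * L) * ‖g i - g j‖ ^ 2 ≤ fv i) :
    ∃ f : E → ℝ, ConvexOn ℝ Set.univ f ∧ Differentiable ℝ f ∧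
      (∀ u v, ‖gradient f u - gradient f v‖ ≤ L * ‖u - v‖) ∧
      (∀ i, f (x i) = fv i) ∧ (∀ i, gradient f (x i) = g i) := by
  have hL2 : (0:ℝ) < 2 * L := by linarith
  have hne : (Finset.univ : Finset ι).Nonempty := Finset.univ_nonempty
  obtain ⟨q, hqdef⟩ : ∃ q : ι → E → ℝ,
      q = fun i y => ⟪y, x i⟫ - fv i + 1 / (2 * L) * ‖y - g i‖ ^ 2 := ⟨_, rfl⟩
  obtain ⟨h, hhdef⟩ : ∃ h : E → ℝ,
      h = fun y => Finset.univ.sup' hne (fun i => q i y) := ⟨_, rfl⟩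
  have hq_affine : ∀ (k : ι) (y : E),
      q k y = 1 / (2 * L) * ‖y‖ ^ 2 + ⟪y, x k - (1 / L) • g k⟫
        + (1 / (2 * L) * ‖g k‖ ^ 2 - fv k) := by
    intro k y
    have hnorm : ‖y - g k‖ ^ 2 = ‖y‖ ^ 2 - 2 * ⟪y, g k⟫ + ‖g k‖ ^ 2 := norm_sub_sq_real y (g k)
    simp only [hqdef, inner_sub_right, real_inner_smul_right, hnorm]
    field_simp
    ring
  have hq_le : ∀ (k : ι) (y : E), q k y ≤ h y := by
    intro k y
    rw [hhdef]
    exact Finset.le_sup' (fun i => q i y) (Finset.mem_univ k)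
  have hqcont : ∀ i : ι, Continuous (q i) := by
    intro i
    rw [hqdef]
    apply Continuous.add
    · exact (continuous_id.inner continuous_const).sub continuous_const
    · exact continuous_const.mul (((continuous_id.sub continuous_const).norm).pow 2)
  have hhcont : Continuous h := by
    rw [continuous_iff_continuousAt]
    intro y
    rw [hhdef]
    exact ContinuousAt.finset_sup'_apply hne (fun i _ => (hqcont i).continuousAt)
  -- existence of minimizers of y ↦ h y - ⟪xx, y⟫
  have hmin_ex : ∀ xx : E, ∃ y0 : E, ∀ y : E, h y0 - ⟪xx, y0⟫ ≤ h y - ⟪xx, y⟫ := by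
    intro xx
    apply Continuous.exists_forall_le (hhcont.sub (continuous_const.inner continuous_id))
    · -- coercivity
      obtain ⟨i0⟩ := ‹Nonempty ι›
      obtain ⟨C, hC⟩ : ∃ C : ℝ, C = ‖x i0 - (1 / L) • g i0 - xx‖ := ⟨_, rfl⟩
      obtain ⟨D0, hD0⟩ : ∃ D0 : ℝ, D0 = 1 / (2 * L) * ‖g i0‖ ^ 2 - fv i0 := ⟨_, rfl⟩
      have hlow : ∀ y : E, 1 / (2 * L) * ‖y‖ ^ 2 - C * ‖y‖ + D0 ≤ h y - ⟪xx, y⟫ := by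
        intro y
        have h1 := hq_le i0 y
        rw [hq_affine i0 y] at h1
        have h2 : ⟪y, x i0 - (1 / L) • g i0⟫ - ⟪xx, y⟫ = ⟪y, x i0 - (1 / L) • g i0 - xx⟫ := by
          simp only [inner_sub_right, real_inner_comm y xx]
        have h3 : -(‖y‖ * C) ≤ ⟪y, x i0 - (1 / L) • g i0 - xx⟫ := by
          have h4 := abs_real_inner_le_norm y (x i0 - (1 / L) • g i0 - xx)
          rw [← hC] at h4
          cases abs_le.1 h4 with
          | intro hl hr => linarith
        rw [hD0]
        nlinarith [h1, h3]
      have hρ : Tendsto (fun s : ℝ => 1 / (2 * L) * s ^ 2 - C * s + D0) atTop atTop := by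
        apply tendsto_atTop_mono' _ _ (tendsto_atTop_add_const_right _ D0 tendsto_id)
        filter_upwards [eventually_ge_atTop (max 1 (2 * L * (C + 1)))] with s hs
        have hs1 : (1:ℝ) ≤ s := le_trans (le_max_left _ _) hs
        have hs2 : 2 * L * (C + 1) ≤ s := le_trans (le_max_right _ _) hs
        have hdiv : C + 1 ≤ s / (2 * L) := by
          rw [le_div_iff₀ hL2]; linarith [mul_comm (C + 1) (2 * L)]
        have hmul : s * (C + 1) ≤ s * (s / (2 * L)) :=
          mul_le_mul_of_nonneg_left hdiv (by linarith)
        have heq : s * (s / (2 * L)) = 1 / (2 * L) * s ^ 2 := by ring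
        simp only [id_eq]
        linarith [hmul, heq]
      have hcomp : Tendsto (fun y : E => 1 / (2 * L) * ‖y‖ ^ 2 - C * ‖y‖ + D0)
          (cocompact E) atTop := hρ.comp tendsto_norm_cocompact_atTop
      exact tendsto_atTop_mono hlow hcomp
  obtain ⟨Y, hY⟩ : ∃ Y : E → E, ∀ (xx y : E), h (Y xx) - ⟪xx, Y xx⟫ ≤ h y - ⟪xx, y⟫ :=
    ⟨fun xx => (hmin_ex xx).choose, fun xx => (hmin_ex xx).choose_spec⟩
  -- strong combination inequality
  have hcombo : ∀ (xx u v : E) (a b : ℝ), 0 ≤ a → 0 ≤ b → a + b = 1 →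
      h (a • u + b • v) - ⟪xx, a • u + b • v⟫
        ≤ a * (h u - ⟪xx, u⟫) + b * (h v - ⟪xx, v⟫)
          - a * b * (1 / (2 * L) * ‖u - v‖ ^ 2) := by
    intro xx u v a b ha hb hab
    obtain rfl : b = 1 - a := by linarith
    obtain ⟨k, -, hk⟩ := Finset.exists_mem_eq_sup' hne (fun i => q i (a • u + (1 - a) • v))
    have e2 := norm_combo_sq u v a (1 - a) (by ring)
    have e3 : ⟪a • u + (1 - a) • v, x k - (1 / L) • g k⟫
        = a * ⟪u, x k - (1 / L) • g k⟫ + (1 - a) * ⟪v, x k - (1 / L) • g k⟫ := by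
      rw [inner_add_left, real_inner_smul_left, real_inner_smul_left]
    have e4 : ⟪xx, a • u + (1 - a) • v⟫ = a * ⟪xx, u⟫ + (1 - a) * ⟪xx, v⟫ := by
      rw [inner_add_right, real_inner_smul_right, real_inner_smul_right]
    have e5 : h (a • u + (1 - a) • v) - ⟪xx, a • u + (1 - a) • v⟫
        = a * (q k u - ⟪xx, u⟫) + (1 - a) * (q k v - ⟪xx, v⟫)
          - a * (1 - a) * (1 / (2 * L) * ‖u - v‖ ^ 2) := by
      simp only [hhdef]
      rw [hk, hq_affine k (a • u + (1 - a) • v), hq_affine k u, hq_affine k v,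
        e2, e3, e4]
      ring
    have hqu := hq_le k u
    have hqv := hq_le k v
    have t1 : a * (q k u - ⟪xx, u⟫) ≤ a * (h u - ⟪xx, u⟫) :=
      mul_le_mul_of_nonneg_left (by linarith) ha
    have t2 : (1 - a) * (q k v - ⟪xx, v⟫) ≤ (1 - a) * (h v - ⟪xx, v⟫) :=
      mul_le_mul_of_nonneg_left (by linarith) hb
    rw [e5]
    linarith only [t1, t2]
  -- strong minimality
  have hstrong : ∀ (xx y : E),
      h (Y xx) - ⟪xx, Y xx⟫ + 1 / (2 * L) * ‖y - Y xx‖ ^ 2 ≤ h y - ⟪xx, y⟫ := by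
    intro xx y
    have key : ∀ a : ℝ, a ∈ Ioo (0:ℝ) 1 →
        (1 - a) * (1 / (2 * L) * ‖y - Y xx‖ ^ 2)
          ≤ (h y - ⟪xx, y⟫) - (h (Y xx) - ⟪xx, Y xx⟫) := by
      rintro a ⟨ha0, ha1⟩
      have hcb := hcombo xx y (Y xx) a (1 - a) (le_of_lt ha0) (by linarith) (by ring)
      have hmin' := hY xx (a • y + (1 - a) • Y xx)
      have h6 : a * ((1 - a) * (1 / (2 * L) * ‖y - Y xx‖ ^ 2) + (h (Y xx) - ⟪xx, Y xx⟫))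
          ≤ a * (h y - ⟪xx, y⟫) := by nlinarith [hcb, hmin']
      have h7 := le_of_mul_le_mul_left h6 ha0
      linarith only [h7]
    have hl : Tendsto (fun a : ℝ => (1 - a) * (1 / (2 * L) * ‖y - Y xx‖ ^ 2)) (𝓝[>] (0:ℝ))
        (𝓝 ((1 - 0) * (1 / (2 * L) * ‖y - Y xx‖ ^ 2))) := by
      apply Tendsto.mono_left _ nhdsWithin_le_nhds
      exact Continuous.tendsto ((continuous_const.sub continuous_id).mul continuous_const) 0
    have hev : ∀ᶠ a in 𝓝[>] (0:ℝ), (1 - a) * (1 / (2 * L) * ‖y - Y xx‖ ^ 2)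
        ≤ (h y - ⟪xx, y⟫) - (h (Y xx) - ⟪xx, Y xx⟫) := by
      filter_upwards [Ioo_mem_nhdsGT_of_mem
        (by simp [zero_lt_one] : (0:ℝ) ∈ Ico (0:ℝ) 1)] with a ha using key a ha
    have hfin := le_of_tendsto hl hev
    have he : (1 - 0 : ℝ) * (1 / (2 * L) * ‖y - Y xx‖ ^ 2)
        = 1 / (2 * L) * ‖y - Y xx‖ ^ 2 := by ring
    rw [he] at hfin
    linarith only [hfin]
  -- Lipschitz property of Y
  have hYlip : ∀ u v : E, ‖Y u - Y v‖ ≤ L * ‖u - v‖ := by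
    intro u v
    have h1 := hstrong u (Y v)
    have h2 := hstrong v (Y u)
    have e1 : 1 / (2 * L) * ‖Y v - Y u‖ ^ 2 = 1 / (2 * L) * ‖Y u - Y v‖ ^ 2 := by
      rw [norm_sub_rev]
    have e2 : ⟪u - v, Y u - Y v⟫
        = ⟪u, Y u⟫ - ⟪u, Y v⟫ - ⟪v, Y u⟫ + ⟪v, Y v⟫ := by
      rw [inner_sub_left, inner_sub_right, inner_sub_right]; ring
    have e3 : 1 / (2 * L) * ‖Y u - Y v‖ ^ 2 + 1 / (2 * L) * ‖Y u - Y v‖ ^ 2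
        = 1 / L * ‖Y u - Y v‖ ^ 2 := by
      field_simp
      ring
    have hsum : 1 / L * ‖Y u - Y v‖ ^ 2 ≤ ⟪u - v, Y u - Y v⟫ := by
      rw [← e3, e2]
      linarith only [h1, h2, e1]
    rcases eq_or_lt_of_le (norm_nonneg (Y u - Y v)) with hz | hz
    · rw [← hz]
      exact mul_nonneg hL.le (norm_nonneg _)
    · have hcs : ⟪u - v, Y u - Y v⟫ ≤ ‖u - v‖ * ‖Y u - Y v‖ := real_inner_le_norm _ _
      have hstep : L * (1 / L * ‖Y u - Y v‖ ^ 2) ≤ L * (‖u - v‖ * ‖Y u - Y v‖) :=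
        mul_le_mul_of_nonneg_left (hsum.trans hcs) hL.le
      have heq2 : L * (1 / L * ‖Y u - Y v‖ ^ 2) = ‖Y u - Y v‖ * ‖Y u - Y v‖ := by
        field_simp
      rw [heq2] at hstep
      exact le_of_mul_le_mul_right
        (by linarith only [hstep] :
          ‖Y u - Y v‖ * ‖Y u - Y v‖ ≤ L * ‖u - v‖ * ‖Y u - Y v‖) hz
  -- the interpolating function
  obtain ⟨f, hfdef⟩ : ∃ f : E → ℝ, f = fun xx => ⟪xx, Y xx⟫ - h (Y xx) := ⟨_, rfl⟩
  have hsupp : ∀ (xx y : E), ⟪xx, y⟫ - h y ≤ f xx := by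
    intro xx y
    have := hY xx y
    simp only [hfdef]
    linarith
  have hlower : ∀ (xx u : E), f xx + ⟪Y xx, u - xx⟫ ≤ f u := by
    intro xx u
    have h1 := hsupp u (Y xx)
    have h2 : ⟪u, Y xx⟫ - ⟪xx, Y xx⟫ = ⟪Y xx, u - xx⟫ := by
      rw [inner_sub_right, real_inner_comm u (Y xx), real_inner_comm xx (Y xx)]
    simp only [hfdef] at h1 ⊢
    linarith [h2.le, h2.symm.le]
  have hupper : ∀ (xx u : E), f u ≤ f xx + ⟪Y u, u - xx⟫ := by
    intro xx u
    have h1 := hsupp xx (Y u)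
    have h2 : ⟪u, Y u⟫ - ⟪xx, Y u⟫ = ⟪Y u, u - xx⟫ := by
      rw [inner_sub_right, real_inner_comm u (Y u), real_inner_comm xx (Y u)]
    simp only [hfdef] at h1 ⊢
    linarith [h2.le, h2.symm.le]
  have hgrad : ∀ xx : E, HasGradientAt f (Y xx) xx := by
    intro xx
    rw [hasGradientAt_iff_isLittleO, Asymptotics.isLittleO_iff]
    intro ε hε
    have hball : Metric.ball xx (ε / L) ∈ 𝓝 xx := Metric.ball_mem_nhds xx (by positivity)
    filter_upwards [hball] with u hu
    rw [Metric.mem_ball, dist_eq_norm] at hu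
    have hb1 : 0 ≤ f u - f xx - ⟪Y xx, u - xx⟫ := by linarith [hlower xx u]
    have hb2 : f u - f xx - ⟪Y xx, u - xx⟫ ≤ L * ‖u - xx‖ ^ 2 := by
      have h1 := hupper xx u
      have h2 : ⟪Y u, u - xx⟫ - ⟪Y xx, u - xx⟫ = ⟪Y u - Y xx, u - xx⟫ := by
        rw [inner_sub_left]
      have h3 : ⟪Y u - Y xx, u - xx⟫ ≤ ‖Y u - Y xx‖ * ‖u - xx‖ := real_inner_le_norm _ _
      have h4 : ‖Y u - Y xx‖ * ‖u - xx‖ ≤ L * ‖u - xx‖ * ‖u - xx‖ :=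
        mul_le_mul_of_nonneg_right (hYlip u xx) (norm_nonneg _)
      nlinarith [h1]
    rw [Real.norm_eq_abs, abs_of_nonneg hb1]
    have h5 : ‖u - xx‖ * L < ε := (lt_div_iff₀ hL).1 hu
    have h6 : L * ‖u - xx‖ ^ 2 ≤ ε * ‖u - xx‖ := by
      nlinarith [h5, norm_nonneg (u - xx)]
    calc f u - f xx - ⟪Y xx, u - xx⟫ ≤ L * ‖u - xx‖ ^ 2 := hb2
      _ ≤ ε * ‖u - xx‖ := h6
      _ = ε * ‖u - xx‖ := rfl
  have hgradf : ∀ xx : E, gradient f xx = Y xx := fun xx => (hgrad xx).gradient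
  -- interpolation values
  have hgi : ∀ i : ι, h (g i) = ⟪g i, x i⟫ - fv i := by
    intro i
    apply le_antisymm
    · rw [hhdef]
      apply Finset.sup'_le
      intro j _
      have hji := hint j i
      rw [norm_sub_rev (g j) (g i), inner_sub_right] at hji
      simp only [hqdef]
      linarith only [hji]
    · have h1 := hq_le i (g i)
      simp only [hqdef] at h1
      simp only [sub_self, norm_zero] at h1
      calc ⟪g i, x i⟫ - fv i = ⟪g i, x i⟫ - fv i + 1 / (2 * L) * 0 ^ 2 := by ring
        _ ≤ h (g i) := h1
  have hYi : ∀ i : ι, Y (x i) = g i := by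
    intro i
    have hA : ∀ y : E, -fv i + 1 / (2 * L) * ‖y - g i‖ ^ 2 ≤ h y - ⟪x i, y⟫ := by
      intro y
      have h1 := hq_le i y
      simp only [hqdef] at h1
      have h2 : ⟪y, x i⟫ = ⟪x i, y⟫ := real_inner_comm _ _
      linarith [h1, h2.le, h2.symm.le]
    have hB : h (g i) - ⟪x i, g i⟫ = -fv i := by
      rw [hgi i, real_inner_comm (g i) (x i)]; ring
    have h1 := hY (x i) (g i)
    rw [hB] at h1
    have h2 := hA (Y (x i))
    have h3 : 1 / (2 * L) * ‖Y (x i) - g i‖ ^ 2 ≤ 0 := by linarith only [h1, h2]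
    have h3' : ‖Y (x i) - g i‖ ^ 2 ≤ 0 := by
      have h5 := mul_le_mul_of_nonneg_left h3 hL2.le
      have heq : (2 * L) * (1 / (2 * L) * ‖Y (x i) - g i‖ ^ 2) = ‖Y (x i) - g i‖ ^ 2 := by
        field_simp
      rw [heq] at h5
      linarith only [h5]
    have h4 : ‖Y (x i) - g i‖ = 0 := by
      have h7 : ‖Y (x i) - g i‖ ^ 2 = 0 := le_antisymm h3' (sq_nonneg _)
      exact pow_eq_zero_iff (by norm_num) |>.1 h7
    exact sub_eq_zero.1 (norm_eq_zero.1 h4)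
  have hfi : ∀ i : ι, f (x i) = fv i := by
    intro i
    simp only [hfdef]
    rw [hYi i, hgi i, real_inner_comm (x i) (g i)]
    ring
  -- convexity
  have hconv : ConvexOn ℝ Set.univ f := by
    refine ⟨convex_univ, fun u _ v _ a b ha hb hab => ?_⟩
    have e1 : f (a • u + b • v)
        = a * (⟪u, Y (a • u + b • v)⟫ - h (Y (a • u + b • v)))
          + b * (⟪v, Y (a • u + b • v)⟫ - h (Y (a • u + b • v))) := by
      simp only [hfdef]
      rw [inner_add_left, real_inner_smul_left, real_inner_smul_left]
      have e0 : a * h (Y (a • u + b • v)) + b * h (Y (a • u + b • v))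
          = h (Y (a • u + b • v)) := by
        rw [← add_mul, hab, one_mul]
      linarith [e0]
    have t1 : a * (⟪u, Y (a • u + b • v)⟫ - h (Y (a • u + b • v))) ≤ a * f u :=
      mul_le_mul_of_nonneg_left (hsupp u (Y (a • u + b • v))) ha
    have t2 : b * (⟪v, Y (a • u + b • v)⟫ - h (Y (a • u + b • v))) ≤ b * f v :=
      mul_le_mul_of_nonneg_left (hsupp v (Y (a • u + b • v))) hb
    rw [e1]
    calc _ ≤ a * f u + b * f v := by linarith only [t1, t2]
      _ = a • f u + b • f v := by simp [smul_eq_mul]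
  refine ⟨f, hconv, fun xx => (hgrad xx).differentiableAt, ?_, hfi, ?_⟩
  · intro u v
    rw [hgradf u, hgradf v]
    exact hYlip u v
  · intro i
    rw [hgradf (x i), hYi i]

end Suff

/-- Corollary 1 of the paper (`F_{0,L}`-interpolability):
there exists a convex differentiable function with `L`-Lipschitz gradient interpolating
the data triples iff `f_i ≥ f_j + ⟪g_j, x_i - x_j⟫ + (1/(2L))‖g_i - g_j‖²` for all `i, j`. -/
theorem smooth_convex_interpolation {d : ℕ} {ι : Type*} [Fintype ι]
    (L : ℝ) (hL : 0 < L)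
    (x g : ι → EuclideanSpace ℝ (Fin d)) (fv : ι → ℝ) :
    (∃ f : EuclideanSpace ℝ (Fin d) → ℝ,
        ConvexOn ℝ Set.univ f ∧
        Differentiable ℝ f ∧
        (∀ u v, ‖gradient f u - gradient f v‖ ≤ L * ‖u - v‖) ∧
        (∀ i, f (x i) = fv i) ∧
        (∀ i, gradient f (x i) = g i)) ↔
      (∀ i j, fv i ≥ fv j + ⟪g j, x i - x j⟫ + 1 / (2 * L) * ‖g i - g j‖ ^ 2) := by
  constructor
  · rintro ⟨f, hc, hd, hlip, hfx, hfg⟩ i j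
    have hnec := necessity hL hc hd hlip (x i) (x j)
    rw [hfx i, hfx j, hfg i, hfg j] at hnec
    exact hnec
  · intro hint
    rcases isEmpty_or_nonempty ι with hι | hι
    · refine ⟨fun _ => 0, convexOn_const 0 convex_univ, differentiable_const 0, ?_, ?_, ?_⟩
      · intro u v
        rw [gradient_fun_const u (0:ℝ), gradient_fun_const v (0:ℝ)]
        simpa using mul_nonneg hL.le (norm_nonneg (u - v))
      · exact fun i => (hι.elim i)
      · exact fun i => (hι.elim i)
    · obtain ⟨f, h1, h2, h3, h4, h5⟩ := sufficiency hL x g fv (fun i j => hint i j)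
      exact ⟨f, h1, h2, h3, h4, h5⟩
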